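/- arXiv:2003.02566 — 4 statements merged into one kernel-verified Lean document; each statement's English description precedes it below -/
import Mathlib

section
/- Fix τ > 0 and suppose H' = H but θ' ≠ θ. Then with Z_t = t^h X_{t^{θ/θ'}} (h = H(1 - θ/θ')), one has E[(Z_τ - Z_0)²] = σ²τ^{2H} while lim_{t→∞} E[(Z_{t+τ} - Z_t)²] = σ²(θτ/θ')^{2H}, and these two values differ. Hence Z does not have stationary increments. -/
open MeasureTheory Real Filter Topology

private lemma key_slope (τ : ℝ) (hτ : 0 < τ) (r : ℝ) :
    Tendsto (fun t : ℝ => t ^ (1 - r) * ((t + τ) ^ r - t ^ r)) atTop (𝓝 (r * τ)) := by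
  have hderiv : HasDerivAt (fun x : ℝ => x ^ r) r 1 := by
    simpa using Real.hasDerivAt_rpow_const (x := 1) (p := r) (Or.inl one_ne_zero)
  have hslope : Tendsto (fun y : ℝ => (y ^ r - 1) / (y - 1)) (𝓝[≠] 1) (𝓝 r) := by
    have := hasDerivAt_iff_tendsto_slope.mp hderiv
    simpa [slope_fun_def, Real.one_rpow, div_eq_inv_mul] using this
  have hmap : Tendsto (fun t : ℝ => 1 + τ / t) atTop (𝓝[≠] (1:ℝ)) := by
    rw [tendsto_nhdsWithin_iff]
    constructor
    · have h0 : Tendsto (fun t : ℝ => τ / t) atTop (𝓝 0) :=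
        tendsto_const_nhds.div_atTop tendsto_id
      simpa using tendsto_const_nhds.add h0
    · filter_upwards [eventually_gt_atTop (0:ℝ)] with t ht
      have : 0 < τ / t := div_pos hτ ht
      simp only [Set.mem_compl_iff, Set.mem_singleton_iff]
      intro h
      nlinarith [h]
  have hcomp : Tendsto (fun t : ℝ => τ * (((1 + τ / t) ^ r - 1) / ((1 + τ / t) - 1)))
      atTop (𝓝 (τ * r)) := (hslope.comp hmap).const_mul τ
  rw [show r * τ = τ * r by ring]
  refine hcomp.congr' ?_
  filter_upwards [eventually_gt_atTop (0:ℝ)] with t ht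
  have ht0 : (0:ℝ) ≤ t := ht.le
  have htr : t ^ r ≠ 0 := (Real.rpow_pos_of_pos ht r).ne'
  have h1 : (1 : ℝ) + τ / t = (t + τ) / t := by field_simp
  have h2 : ((t + τ) / t) ^ r = (t + τ) ^ r / t ^ r :=
    Real.div_rpow (by linarith) ht0 r
  have h3 : t ^ (1 - r) = t / t ^ r := by
    rw [eq_div_iff htr, ← Real.rpow_add ht]
    simp
  rw [h1, h2, h3]
  have hτ0 : τ ≠ 0 := hτ.ne'
  field_simp
  ring_nf
  rw [mul_comm τ ((τ + t) ^ r), mul_comm τ (t ^ r), mul_inv_cancel_right₀ hτ0,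
    mul_inv_cancel_right₀ hτ0]

private lemma integrable_of_integral_ne_zero {Ω : Type*} [MeasurableSpace Ω] {P : Measure Ω}
    {f : Ω → ℝ} (h : ∫ ω, f ω ∂P ≠ 0) : Integrable f P := by
  by_contra hf
  exact h (integral_undef hf)

private lemma cov_pos {H σ : ℝ} (hH : 0 < H) (hσ : 0 < σ) {a b : ℝ} (ha : 0 < a) (hb : 0 < b) :
    0 < σ ^ 2 / 2 * (|a| ^ (2 * H) + |b| ^ (2 * H) - |a - b| ^ (2 * H)) := by
  have h2H : 0 < 2 * H := by linarith
  have key : |a - b| ^ (2 * H) < |a| ^ (2 * H) + |b| ^ (2 * H) := by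
    rw [abs_of_pos ha, abs_of_pos hb]
    rcases eq_or_ne a b with h | h
    · simp [h, sub_self, Real.zero_rpow h2H.ne']
      positivity
    · have hlt : |a - b| < max a b := by
        rcases le_or_gt a b with hab | hab
        · rw [abs_of_nonpos (by linarith), max_eq_right hab]; linarith [ha]
        · rw [abs_of_pos (by linarith), max_eq_left hab.le]; linarith [hb]
      have h1 : |a - b| ^ (2 * H) < (max a b) ^ (2 * H) :=
        Real.rpow_lt_rpow (abs_nonneg _) hlt h2H
      have h2 : (max a b) ^ (2 * H) ≤ a ^ (2 * H) + b ^ (2 * H) := by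
        rcases max_cases a b with ⟨hm, _⟩ | ⟨hm, _⟩ <;> rw [hm]
        · nlinarith [Real.rpow_pos_of_pos hb (2 * H)]
        · nlinarith [Real.rpow_pos_of_pos ha (2 * H)]
      linarith
  have : 0 < |a| ^ (2 * H) + |b| ^ (2 * H) - |a - b| ^ (2 * H) := by linarith
  positivity

theorem stmt7 {Ω : Type*} [MeasurableSpace Ω] (P : Measure Ω) [IsProbabilityMeasure P]
    (X Z : ℝ → Ω → ℝ) (H σ θ θ' : ℝ)
    (hH : H ∈ Set.Ioo (0:ℝ) 1) (hσ : 0 < σ) (hθ : 0 < θ) (hθ' : 0 < θ')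
    (hne : θ ≠ θ')
    (hcov : ∀ s t : ℝ, ∫ ω, X t ω * X s ω ∂P =
      σ ^ 2 / 2 * (|t| ^ (2 * H) + |s| ^ (2 * H) - |t - s| ^ (2 * H)))
    (hZ : ∀ t : ℝ, 0 < t → ∀ ω,
      Z t ω = t ^ (H * (1 - θ / θ')) * X (t ^ (θ / θ')) ω)
    (hZ0 : ∀ ω, Z 0 ω = 0)
    (τ : ℝ) (hτ : 0 < τ) :
    (∫ ω, (Z τ ω - Z 0 ω) ^ 2 ∂P = σ ^ 2 * τ ^ (2 * H)) ∧
    Tendsto (fun t : ℝ => ∫ ω, (Z (t + τ) ω - Z t ω) ^ 2 ∂P) atTop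
      (nhds (σ ^ 2 * (θ * τ / θ') ^ (2 * H))) ∧
    σ ^ 2 * τ ^ (2 * H) ≠ σ ^ 2 * (θ * τ / θ') ^ (2 * H) := by
  obtain ⟨hH0, hH1⟩ := hH
  set α : ℝ := θ / θ' with hα
  have hα0 : 0 < α := div_pos hθ hθ'
  have h2H : 0 < 2 * H := by linarith
  -- integrability of products
  have hint : ∀ a b : ℝ, 0 < a → 0 < b → Integrable (fun ω => X a ω * X b ω) P := by
    intro a b ha hb
    apply integrable_of_integral_ne_zero
    rw [hcov b a]
    exact (cov_pos hH0 hσ ha hb).ne'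
  -- expansion of second moment of increments
  have expand : ∀ a b : ℝ, 0 < a → 0 < b → ∀ c d : ℝ,
      ∫ ω, (c * X a ω - d * X b ω) ^ 2 ∂P =
        c ^ 2 * (∫ ω, X a ω * X a ω ∂P) - 2 * c * d * (∫ ω, X a ω * X b ω ∂P)
          + d ^ 2 * (∫ ω, X b ω * X b ω ∂P) := by
    intro a b ha hb c d
    have iaa := hint a a ha ha
    have iab := hint a b ha hb
    have ibb := hint b b hb hb
    have heq : (fun ω => (c * X a ω - d * X b ω) ^ 2) =
        fun ω => (c ^ 2 * (X a ω * X a ω) - 2 * c * d * (X a ω * X b ω))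
          + d ^ 2 * (X b ω * X b ω) := funext fun ω => by ring
    have i1 : Integrable (fun ω => c ^ 2 * (X a ω * X a ω) - 2 * c * d * (X a ω * X b ω)) P :=
      (iaa.const_mul _).sub (iab.const_mul _)
    have i2 : Integrable (fun ω => d ^ 2 * (X b ω * X b ω)) P := ibb.const_mul _
    rw [heq, integral_add i1 i2, integral_sub (iaa.const_mul _) (iab.const_mul _),
      integral_const_mul, integral_const_mul, integral_const_mul]
  -- part 1
  have part1 : ∫ ω, (Z τ ω - Z 0 ω) ^ 2 ∂P = σ ^ 2 * τ ^ (2 * H) := by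
    have hτα : 0 < τ ^ α := Real.rpow_pos_of_pos hτ α
    have heq : (fun ω => (Z τ ω - Z 0 ω) ^ 2) =
        fun ω => (τ ^ (H * (1 - α)) * X (τ ^ α) ω - 0 * X (τ ^ α) ω) ^ 2 :=
      funext fun ω => by rw [hZ0, hZ τ hτ]; ring
    rw [heq, expand (τ ^ α) (τ ^ α) hτα hτα _ 0, hcov (τ ^ α) (τ ^ α)]
    rw [abs_of_pos hτα, sub_self, abs_zero, Real.zero_rpow h2H.ne',
      ← Real.rpow_mul hτ.le α (2 * H)]
    have e3 : τ ^ (H * (1 - α)) * τ ^ (H * (1 - α)) * τ ^ (α * (2 * H)) = τ ^ (2 * H) := by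
      rw [← Real.rpow_add hτ, ← Real.rpow_add hτ]
      congr 1
      ring
    linear_combination σ ^ 2 * e3
  refine ⟨part1, ?_, ?_⟩
  · -- the limit
    -- eventual equality with an explicit formula F
    have hF_eq : ∀ᶠ t : ℝ in atTop, (∫ ω, (Z (t + τ) ω - Z t ω) ^ 2 ∂P) =
        σ ^ 2 * (((t + τ) ^ (H * (1 + α)) - t ^ (H * (1 + α))) *
            ((t + τ) ^ (H * (1 - α)) - t ^ (H * (1 - α))) +
          (t + τ) ^ (H * (1 - α)) * t ^ (H * (1 - α)) *
            ((t + τ) ^ α - t ^ α) ^ (2 * H)) := by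
      filter_upwards [eventually_gt_atTop (0:ℝ)] with t ht
      have hu : 0 < t + τ := by linarith
      have ha : 0 < (t + τ) ^ α := Real.rpow_pos_of_pos hu α
      have hb : 0 < t ^ α := Real.rpow_pos_of_pos ht α
      have hba : t ^ α < (t + τ) ^ α := Real.rpow_lt_rpow ht.le (by linarith) hα0
      have heq : (fun ω => (Z (t + τ) ω - Z t ω) ^ 2) =
          fun ω => ((t + τ) ^ (H * (1 - α)) * X ((t + τ) ^ α) ω
            - t ^ (H * (1 - α)) * X (t ^ α) ω) ^ 2 :=
        funext fun ω => by rw [hZ (t + τ) hu, hZ t ht]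
      rw [heq, expand _ _ ha hb, hcov ((t + τ) ^ α) ((t + τ) ^ α),
        hcov (t ^ α) ((t + τ) ^ α), hcov (t ^ α) (t ^ α)]
      rw [abs_of_pos ha, abs_of_pos hb, abs_of_pos (sub_pos.mpr hba)]
      simp only [sub_self, abs_zero, Real.zero_rpow h2H.ne']
      simp only [← Real.rpow_mul hu.le, ← Real.rpow_mul ht.le]
      have r1 : (t + τ) ^ (H * (1 - α)) * (t + τ) ^ (α * (2 * H)) = (t + τ) ^ (H * (1 + α)) := by
        rw [← Real.rpow_add hu]; congr 1; ring
      have r2 : t ^ (H * (1 - α)) * t ^ (α * (2 * H)) = t ^ (H * (1 + α)) := by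
        rw [← Real.rpow_add ht]; congr 1; ring
      linear_combination (σ ^ 2 * ((t + τ) ^ (H * (1 - α)) - t ^ (H * (1 - α)))) * r1
        - (σ ^ 2 * ((t + τ) ^ (H * (1 - α)) - t ^ (H * (1 - α)))) * r2
    -- limit of the first term
    have hT1 : Tendsto (fun t : ℝ => ((t + τ) ^ (H * (1 + α)) - t ^ (H * (1 + α))) *
        ((t + τ) ^ (H * (1 - α)) - t ^ (H * (1 - α)))) atTop (𝓝 0) := by
      have base : Tendsto (fun t : ℝ => t ^ (2 * H - 2)) atTop (𝓝 0) := by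
        have := tendsto_rpow_neg_atTop (show (0:ℝ) < 2 - 2 * H by linarith)
        simpa [show -(2 - 2 * H) = 2 * H - 2 by ring] using this
      have prod := (base.mul (key_slope τ hτ (H * (1 + α)))).mul
        (key_slope τ hτ (H * (1 - α)))
      rw [zero_mul, zero_mul] at prod
      refine prod.congr' ?_
      filter_upwards [eventually_gt_atTop (0:ℝ)] with t ht
      have hone : t ^ (2 * H - 2) * t ^ (1 - H * (1 + α)) * t ^ (1 - H * (1 - α)) = 1 := by
        rw [← Real.rpow_add ht, ← Real.rpow_add ht,
          show 2 * H - 2 + (1 - H * (1 + α)) + (1 - H * (1 - α)) = 0 by ring, Real.rpow_zero]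
      linear_combination (((t + τ) ^ (H * (1 + α)) - t ^ (H * (1 + α))) *
        ((t + τ) ^ (H * (1 - α)) - t ^ (H * (1 - α)))) * hone
    -- limit of the second term
    have hg : Tendsto (fun t : ℝ => ((t + τ) / t) ^ ((1 - α) / 2) *
        (t ^ (1 - α) * ((t + τ) ^ α - t ^ α))) atTop (𝓝 (α * τ)) := by
      have hdiv : Tendsto (fun t : ℝ => (t + τ) / t) atTop (𝓝 1) := by
        have h0 : Tendsto (fun t : ℝ => 1 + τ / t) atTop (𝓝 1) := by
          have : Tendsto (fun t : ℝ => τ / t) atTop (𝓝 0) :=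
            tendsto_const_nhds.div_atTop tendsto_id
          simpa using tendsto_const_nhds.add this
        refine h0.congr' ?_
        filter_upwards [eventually_gt_atTop (0:ℝ)] with t ht
        field_simp
      have hf1 : Tendsto (fun t : ℝ => ((t + τ) / t) ^ ((1 - α) / 2)) atTop (𝓝 1) := by
        have := (Real.continuousAt_rpow_const 1 ((1 - α) / 2) (Or.inl one_ne_zero)).tendsto.comp hdiv
        simpa [Function.comp_def] using this
      have := hf1.mul (key_slope τ hτ α)
      simpa using this
    have hT2 : Tendsto (fun t : ℝ => (t + τ) ^ (H * (1 - α)) * t ^ (H * (1 - α)) *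
        ((t + τ) ^ α - t ^ α) ^ (2 * H)) atTop (𝓝 ((α * τ) ^ (2 * H))) := by
      have hg2H := (Real.continuousAt_rpow_const (α * τ) (2 * H)
        (Or.inr h2H.le)).tendsto.comp hg
      refine hg2H.congr' ?_
      filter_upwards [eventually_gt_atTop (0:ℝ)] with t ht
      have hu : 0 < t + τ := by linarith
      have hba : t ^ α < (t + τ) ^ α := Real.rpow_lt_rpow ht.le (by linarith) hα0
      have hD : (0:ℝ) ≤ (t + τ) ^ α - t ^ α := by linarith
      have hv2 : t ^ (1 - α) = t ^ ((1 - α) / 2) * t ^ ((1 - α) / 2) := by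
        rw [← Real.rpow_add ht]; congr 1; ring
      have hinner : ((t + τ) / t) ^ ((1 - α) / 2) * (t ^ (1 - α) * ((t + τ) ^ α - t ^ α)) =
          (t + τ) ^ ((1 - α) / 2) * (t ^ ((1 - α) / 2) * ((t + τ) ^ α - t ^ α)) := by
        rw [Real.div_rpow hu.le ht.le, hv2]
        have hne' : t ^ ((1 - α) / 2) ≠ 0 := (Real.rpow_pos_of_pos ht _).ne'
        field_simp
      show (((t + τ) / t) ^ ((1 - α) / 2) * (t ^ (1 - α) * ((t + τ) ^ α - t ^ α))) ^ (2 * H) = _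
      rw [hinner, Real.mul_rpow (Real.rpow_pos_of_pos hu _).le (by positivity),
        Real.mul_rpow (Real.rpow_pos_of_pos ht _).le hD,
        ← Real.rpow_mul hu.le, ← Real.rpow_mul ht.le,
        show (1 - α) / 2 * (2 * H) = H * (1 - α) by ring]
      ring
    have hlim := (hT1.add hT2).const_mul (σ ^ 2)
    rw [zero_add] at hlim
    have hατ : α * τ = θ * τ / θ' := by rw [hα]; ring
    rw [hατ] at hlim
    exact hlim.congr' (hF_eq.mono fun t h => h.symm)
  · -- the inequality
    intro h
    have hbase : (0:ℝ) < θ * τ / θ' := by positivity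
    have h2 : τ ^ (2 * H) = (θ * τ / θ') ^ (2 * H) :=
      mul_left_cancel₀ (by positivity : (σ:ℝ) ^ 2 ≠ 0) h
    have h3 : τ = θ * τ / θ' := by
      have hc := congrArg (fun x : ℝ => x ^ (1 / (2 * H))) h2
      rwa [← Real.rpow_mul hτ.le, ← Real.rpow_mul hbase.le,
        show 2 * H * (1 / (2 * H)) = 1 by rw [mul_one_div, div_self h2H.ne'],
        Real.rpow_one, Real.rpow_one] at hc
    have h4 : θ * τ = θ' * τ := by
      field_simp at h3
      rw [h3]
    exact hne (mul_right_cancel₀ hτ.ne' h4)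
end

section
/- For fixed τ > 0, with Z_t = t^h X_{t^{θ/θ'}} and h = H' - (θ/θ')H, the asymptotic equivalence E[(Z_{t+τ} - Z_t)²] ~ σ² t^{2H'} (θτ/(θ' t))^{2H} holds as t → +∞; i.e. the ratio of the two sides tends to 1. -/
open MeasureTheory Real Filter Topology

lemma tendsto_slope_rpow' (p : ℝ) :
    Tendsto (fun u : ℝ => ((1+u) ^ p - 1) / u) (𝓝[>] (0:ℝ)) (𝓝 p) := by
  have hd : HasDerivAt (fun x : ℝ => x ^ p) p 1 := by
    have := Real.hasDerivAt_rpow_const (x := (1:ℝ)) (p := p) (Or.inl one_ne_zero)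
    simpa using this
  have hs := hasDerivAt_iff_tendsto_slope.mp hd
  have hm : Tendsto (fun u : ℝ => 1 + u) (𝓝[>] (0:ℝ)) (𝓝[≠] (1:ℝ)) := by
    apply tendsto_nhdsWithin_of_tendsto_nhds_of_eventually_within
    · have : Tendsto (fun u : ℝ => 1 + u) (𝓝 (0:ℝ)) (𝓝 (1:ℝ)) := by
        simpa using (continuous_add_left (1:ℝ)).tendsto (0:ℝ)
      exact this.mono_left nhdsWithin_le_nhds
    · filter_upwards [self_mem_nhdsWithin] with u hu
      simp only [Set.mem_compl_iff, Set.mem_singleton_iff]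
      intro h; rw [Set.mem_Ioi] at hu; nlinarith [h]
  have hc := hs.comp hm
  refine hc.congr (fun u => ?_)
  simp [Function.comp, slope_def_field, Real.one_rpow]

lemma tendsto_F (H α h : ℝ) (hH0 : 0 < H) (hH1 : H < 1) (hα : 0 < α) :
    Tendsto (fun u : ℝ =>
      (1+u) ^ h * (((1+u) ^ α - 1)/(α*u)) ^ (2*H) +
      (((1+u) ^ h - 1)/u) * (((1+u) ^ (h+2*(α*H)) - 1)/u) * (u ^ (2-2*H)/α ^ (2*H)))
      (𝓝[>] (0:ℝ)) (𝓝 1) := by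
  have l1 : Tendsto (fun u : ℝ => (1+u) ^ h) (𝓝[>] (0:ℝ)) (𝓝 1) := by
    have hc : ContinuousAt (fun u : ℝ => (1+u) ^ h) 0 := by
      apply ContinuousAt.rpow_const (by fun_prop)
      left; norm_num
    have := hc.continuousWithinAt (s := Set.Ioi 0)
    simpa [ContinuousWithinAt] using this
  have l2 : Tendsto (fun u : ℝ => (((1+u) ^ α - 1)/(α*u)) ^ (2*H)) (𝓝[>] (0:ℝ)) (𝓝 1) := by
    have h2 : Tendsto (fun u : ℝ => ((1+u) ^ α - 1)/(α*u)) (𝓝[>] (0:ℝ)) (𝓝 1) := by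
      have := (tendsto_slope_rpow' α).div_const α
      rw [div_self hα.ne'] at this
      refine this.congr (fun u => ?_)
      rw [div_div, mul_comm]
    have := h2.rpow_const (p := 2*H) (Or.inr (by positivity))
    simpa using this
  have l3 := tendsto_slope_rpow' h
  have l4 := tendsto_slope_rpow' (h+2*(α*H))
  have l5 : Tendsto (fun u : ℝ => u ^ (2-2*H)/α ^ (2*H)) (𝓝[>] (0:ℝ)) (𝓝 0) := by
    have hc : Tendsto (fun u : ℝ => u ^ (2-2*H)) (𝓝[>] (0:ℝ)) (𝓝 0) := by
      have := (Real.continuousAt_rpow_const 0 (2-2*H) (Or.inr (by linarith))).continuousWithinAt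
        (s := Set.Ioi 0)
      simpa [ContinuousWithinAt, Real.zero_rpow (by linarith : 2-2*H ≠ 0)] using this
    simpa using hc.div_const (α ^ (2*H))
  have := (l1.mul l2).add ((l3.mul l4).mul l5)
  simpa using this

lemma algebra_id (σ H H' α τ t : ℝ) (hσ : 0 < σ) (hH0 : 0 < H)
    (hα : 0 < α) (hτ : 0 < τ) (ht : 0 < t) :
    ((t+τ)^(H'-α*H) * (t+τ)^(H'-α*H) * (σ^2 * ((t+τ)^α)^(2*H))
      - 2*((t+τ)^(H'-α*H) * t^(H'-α*H)) *
        (σ^2/2 * (((t+τ)^α)^(2*H) + (t^α)^(2*H) - ((t+τ)^α - t^α)^(2*H)))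
      + t^(H'-α*H) * t^(H'-α*H) * (σ^2 * (t^α)^(2*H)))
      / (σ^2 * t^(2*H') * (α*(τ/t))^(2*H))
    = (1+τ/t)^(H'-α*H) * (((1+τ/t)^α - 1)/(α*(τ/t)))^(2*H)
      + (((1+τ/t)^(H'-α*H) - 1)/(τ/t)) * (((1+τ/t)^((H'-α*H)+2*(α*H)) - 1)/(τ/t))
        * ((τ/t)^(2-2*H)/α^(2*H)) := by
  set u := τ/t with hu_def
  have hu : 0 < u := div_pos hτ ht
  set s := 1 + u with hs_def
  have hs0 : (0:ℝ) < s := by linarith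
  have hs1 : (1:ℝ) < s := by linarith
  have hts : t * s = t + τ := by
    rw [hs_def, hu_def]; field_simp
  have f1 : ∀ p : ℝ, (t+τ)^p = t^p * s^p := by
    intro p; rw [← hts, Real.mul_rpow ht.le hs0.le]
  have hsα : 1 ≤ s^α := by
    rw [show (1:ℝ) = 1^α by rw [Real.one_rpow]]
    exact Real.rpow_le_rpow (by norm_num) hs1.le hα.le
  have f2 : (t+τ)^α - t^α = t^α * (s^α - 1) := by rw [f1]; ring
  have f3 : ((t+τ)^α - t^α)^(2*H) = (t^α)^(2*H) * (s^α - 1)^(2*H) := by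
    rw [f2, Real.mul_rpow (Real.rpow_nonneg ht.le α) (by linarith)]
  have f4 : ((t+τ)^α)^(2*H) = (t^α)^(2*H) * (s^α)^(2*H) := by
    rw [f1, Real.mul_rpow (Real.rpow_nonneg ht.le α) (Real.rpow_nonneg hs0.le α)]
  have f5 : t^(H'-α*H) * t^(H'-α*H) * (t^α)^(2*H) = t^(2*H') := by
    rw [← Real.rpow_mul ht.le, ← Real.rpow_add ht, ← Real.rpow_add ht]
    ring_nf
  have f6 : s^((H'-α*H)+2*(α*H)) = s^(H'-α*H) * s^(2*(α*H)) := Real.rpow_add hs0 _ _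
  have f6' : (s^α)^(2*H) = s^(2*(α*H)) := by
    rw [← Real.rpow_mul hs0.le]; ring_nf
  have f7 : (α*u)^(2*H) = α^(2*H) * u^(2*H) := Real.mul_rpow hα.le hu.le
  have f8 : ((s^α - 1)/(α*u))^(2*H) = (s^α-1)^(2*H) / (α^(2*H) * u^(2*H)) := by
    rw [Real.div_rpow (by linarith) (by positivity), f7]
  have f9 : u^(2-2*H) = u^2 / u^(2*H) := by
    rw [Real.rpow_sub hu, Real.rpow_two]
  rw [f3, f4, f7, f8, f9, f6, f6']
  rw [f6'] at *
  have hnum : (t + τ) ^ (H' - α * H) * (t + τ) ^ (H' - α * H) * (σ ^ 2 * ((t ^ α) ^ (2 * H) * s ^ (2 * (α * H)))) -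
      2 * ((t + τ) ^ (H' - α * H) * t ^ (H' - α * H)) *
        (σ ^ 2 / 2 * ((t ^ α) ^ (2 * H) * s ^ (2 * (α * H)) + (t ^ α) ^ (2 * H) - (t ^ α) ^ (2 * H) * (s ^ α - 1) ^ (2 * H))) +
      t ^ (H' - α * H) * t ^ (H' - α * H) * (σ ^ 2 * (t ^ α) ^ (2 * H))
    = σ ^ 2 * t ^ (2 * H') * (s^(H'-α*H)*s^(H'-α*H)*s^(2*(α*H)) - s^(H'-α*H)*s^(2*(α*H)) - s^(H'-α*H) + s^(H'-α*H)*(s^α-1)^(2*H) + 1) := by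
    rw [f1 (H'-α*H), ← f5]; ring
  rw [hnum]
  have h1 : σ ^ 2 * t ^ (2*H') ≠ 0 := by positivity
  have h2 : α ^ (2*H) ≠ 0 := by positivity
  have h3 : u ^ (2*H) ≠ 0 := by positivity
  field_simp
  ring

theorem stmt8 {Ω : Type*} [MeasurableSpace Ω] (P : Measure Ω) [IsProbabilityMeasure P]
    (X Z : ℝ → Ω → ℝ) (H H' σ θ θ' : ℝ)
    (hH : H ∈ Set.Ioo (0:ℝ) 1) (hH' : H' ∈ Set.Ioo (0:ℝ) 1)
    (hσ : 0 < σ) (hθ : 0 < θ) (hθ' : 0 < θ')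
    (hcov : ∀ s t : ℝ, ∫ ω, X t ω * X s ω ∂P =
      σ ^ 2 / 2 * (|t| ^ (2 * H) + |s| ^ (2 * H) - |t - s| ^ (2 * H)))
    (hZ : ∀ t : ℝ, 0 < t → ∀ ω,
      Z t ω = t ^ (H' - (θ / θ') * H) * X (t ^ (θ / θ')) ω)
    (τ : ℝ) (hτ : 0 < τ) :
    Tendsto (fun t : ℝ =>
        (∫ ω, (Z (t + τ) ω - Z t ω) ^ 2 ∂P) /
          (σ ^ 2 * t ^ (2 * H') * (θ * τ / (θ' * t)) ^ (2 * H)))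
      atTop (nhds 1) := by
  obtain ⟨hH0, hH1⟩ := hH
  obtain ⟨hH'0, hH'1⟩ := hH'
  set α := θ / θ' with hα_def
  have hα : 0 < α := div_pos hθ hθ'
  have heq : (fun t : ℝ =>
        (∫ ω, (Z (t + τ) ω - Z t ω) ^ 2 ∂P) /
          (σ ^ 2 * t ^ (2 * H') * (θ * τ / (θ' * t)) ^ (2 * H)))
      =ᶠ[atTop] (fun t : ℝ =>
      (1+τ/t) ^ (H'-α*H) * (((1+τ/t) ^ α - 1)/(α*(τ/t))) ^ (2*H) +
      (((1+τ/t) ^ (H'-α*H) - 1)/(τ/t)) * (((1+τ/t) ^ ((H'-α*H)+2*(α*H)) - 1)/(τ/t))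
        * ((τ/t) ^ (2-2*H)/α ^ (2*H))) := by
    filter_upwards [eventually_gt_atTop 0] with t ht
    have ha : 0 < t + τ := by linarith
    set b := (t+τ)^α with hb_def
    set c := t^α with hc_def
    have hb : 0 < b := Real.rpow_pos_of_pos ha α
    have hc0 : 0 < c := Real.rpow_pos_of_pos ht α
    have hcb : c < b := Real.rpow_lt_rpow ht.le (by linarith) hα
    have h2H : (2*H) ≠ 0 := by positivity
    have hval : ∀ x y : ℝ, 0 < y → y ≤ x →
        (∫ ω, X x ω * X y ω ∂P) = σ^2/2 * (x^(2*H) + y^(2*H) - (x-y)^(2*H)) := by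
      intro x y hy hyx
      rw [hcov y x, abs_of_pos (lt_of_lt_of_le hy hyx), abs_of_pos hy,
        abs_of_nonneg (by linarith : (0:ℝ) ≤ x - y)]
    have hbb : (∫ ω, X b ω * X b ω ∂P) = σ^2 * b^(2*H) := by
      rw [hval b b hb le_rfl, sub_self, Real.zero_rpow h2H]; ring
    have hcc : (∫ ω, X c ω * X c ω ∂P) = σ^2 * c^(2*H) := by
      rw [hval c c hc0 le_rfl, sub_self, Real.zero_rpow h2H]; ring
    have hbc : (∫ ω, X b ω * X c ω ∂P) = σ^2/2 * (b^(2*H) + c^(2*H) - (b-c)^(2*H)) :=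
      hval b c hc0 hcb.le
    have Pbb : 0 < σ^2 * b^(2*H) := by positivity
    have Pcc : 0 < σ^2 * c^(2*H) := by positivity
    have Pbc : 0 < σ^2/2 * (b^(2*H) + c^(2*H) - (b-c)^(2*H)) := by
      have h1 : (b-c)^(2*H) < b^(2*H) :=
        Real.rpow_lt_rpow (by linarith) (by linarith) (by positivity)
      have h2 : 0 < c^(2*H) := Real.rpow_pos_of_pos hc0 _
      have h3 : 0 < b^(2*H) + c^(2*H) - (b-c)^(2*H) := by linarith
      positivity
    have Int : ∀ x y : ℝ, (∫ ω, X x ω * X y ω ∂P) ≠ 0 →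
        Integrable (fun ω => X x ω * X y ω) P := by
      intro x y hne
      by_contra hni; exact hne (integral_undef hni)
    have Ibb := Int b b (by rw [hbb]; exact Pbb.ne')
    have Icc := Int c c (by rw [hcc]; exact Pcc.ne')
    have Ibc := Int b c (by rw [hbc]; exact Pbc.ne')
    have hpt : ∀ ω, (Z (t+τ) ω - Z t ω)^2 =
        (t+τ)^(H'-α*H) * (t+τ)^(H'-α*H) * (X b ω * X b ω)
        - 2*((t+τ)^(H'-α*H) * t^(H'-α*H)) * (X b ω * X c ω)
        + t^(H'-α*H) * t^(H'-α*H) * (X c ω * X c ω) := by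
      intro ω; rw [hZ (t+τ) ha, hZ t ht]; ring
    have hint_eq : (∫ ω, (Z (t+τ) ω - Z t ω)^2 ∂P) =
        (t+τ)^(H'-α*H) * (t+τ)^(H'-α*H) * (σ^2 * b^(2*H))
        - 2*((t+τ)^(H'-α*H) * t^(H'-α*H)) *
            (σ^2/2 * (b^(2*H) + c^(2*H) - (b-c)^(2*H)))
        + t^(H'-α*H) * t^(H'-α*H) * (σ^2 * c^(2*H)) := by
      simp only [hpt]
      have I12 : Integrable (fun ω =>
          (t+τ)^(H'-α*H) * (t+τ)^(H'-α*H) * (X b ω * X b ω)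
          - 2*((t+τ)^(H'-α*H) * t^(H'-α*H)) * (X b ω * X c ω)) P :=
        (Ibb.const_mul _).sub (Ibc.const_mul _)
      rw [integral_add I12 (Icc.const_mul _),
        integral_sub (Ibb.const_mul _) (Ibc.const_mul _),
        integral_const_mul, integral_const_mul, integral_const_mul, hbb, hbc, hcc]
    rw [hint_eq]
    have hθτ : θ * τ / (θ' * t) = α * (τ/t) := by
      rw [hα_def, div_mul_div_comm]
    rw [hθτ, hb_def, hc_def]
    exact algebra_id σ H H' α τ t hσ hH0 hα hτ ht
  rw [tendsto_congr' heq]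
  have hF := tendsto_F H α (H'-α*H) hH0 hH1 hα
  have hu : Tendsto (fun t : ℝ => τ/t) atTop (𝓝[>] (0:ℝ)) := by
    rw [tendsto_nhdsWithin_iff]
    constructor
    · exact tendsto_const_nhds.div_atTop tendsto_id
    · filter_upwards [eventually_gt_atTop 0] with t ht
      exact Set.mem_Ioi.mpr (div_pos hτ ht)
  exact hF.comp hu
end

section
/- The function f(t) = cosh(θH t) - 2^{2H-1} |sinh(θt/2)|^{2H} is the autocovariance function of the delampertized standard fBm: if X is a standard fBm with Hurst exponent H and Y_t = e^{-Hθt} X_{e^{θt}}, then E[Y_s Y_t] = f(t-s) for all s,t ∈ ℝ. -/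
open MeasureTheory Real

theorem stmt13 {Ω : Type*} [MeasurableSpace Ω] (P : Measure Ω) [IsProbabilityMeasure P]
    (X Y : ℝ → Ω → ℝ) (H θ : ℝ) (hH : H ∈ Set.Ioo (0:ℝ) 1) (hθ : 0 < θ)
    (hcov : ∀ s t : ℝ, ∫ ω, X t ω * X s ω ∂P =
      1 / 2 * (|t| ^ (2 * H) + |s| ^ (2 * H) - |t - s| ^ (2 * H)))
    (hY : ∀ t ω, Y t ω = Real.exp (-(H * θ * t)) * X (Real.exp (θ * t)) ω) :
    ∀ s t : ℝ, ∫ ω, Y s ω * Y t ω ∂P =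
      Real.cosh (θ * H * (t - s)) -
        2 ^ (2 * H - 1) * |Real.sinh (θ * (t - s) / 2)| ^ (2 * H) := by
  intro s t
  have hmain : ∫ ω, Y s ω * Y t ω ∂P
      = Real.exp (-(H*θ*s)) * Real.exp (-(H*θ*t)) *
        ∫ ω, X (Real.exp (θ*t)) ω * X (Real.exp (θ*s)) ω ∂P := by
    simp_rw [hY]
    rw [← integral_const_mul]
    congr 1; funext ω; ring
  rw [hmain, hcov]
  have habs : ∀ x : ℝ, |Real.exp x| ^ (2*H) = Real.exp (x * (2*H)) := by
    intro x
    rw [abs_of_pos (Real.exp_pos _), Real.rpow_def_of_pos (Real.exp_pos _),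
      Real.log_exp]
  rw [habs, habs]
  have key : Real.exp (θ*t) - Real.exp (θ*s)
      = Real.exp (θ*(s+t)/2) * (2 * Real.sinh (θ*(t-s)/2)) := by
    rw [Real.sinh_eq]
    rw [show (2:ℝ) * ((Real.exp (θ*(t-s)/2) - Real.exp (-(θ*(t-s)/2))) / 2)
        = Real.exp (θ*(t-s)/2) - Real.exp (-(θ*(t-s)/2)) by ring]
    rw [mul_sub, ← Real.exp_add, ← Real.exp_add]
    ring_nf
  rw [key, abs_mul, abs_of_pos (Real.exp_pos _),
    Real.mul_rpow (le_of_lt (Real.exp_pos _)) (abs_nonneg _), abs_mul,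
    Real.mul_rpow (by norm_num) (abs_nonneg _),
    Real.rpow_def_of_pos (Real.exp_pos _), Real.log_exp]
  rw [Real.cosh_eq, Real.rpow_sub (by norm_num : (0:ℝ) < 2), Real.rpow_one,
    ← Real.exp_add]
  have h2 : |(2:ℝ)| = 2 := by norm_num
  rw [h2]
  have p1 : rexp (-(H * θ * s) + -(H * θ * t)) * rexp (θ * t * (2 * H))
      = rexp (θ * H * (t - s)) := by rw [← Real.exp_add]; congr 1; ring
  have p2 : rexp (-(H * θ * s) + -(H * θ * t)) * rexp (θ * s * (2 * H))
      = rexp (-(θ * H * (t - s))) := by rw [← Real.exp_add]; congr 1; ring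
  have p3 : rexp (-(H * θ * s) + -(H * θ * t)) * rexp (θ * (s + t) / 2 * (2 * H)) = 1 := by
    rw [← Real.exp_add, show -(H * θ * s) + -(H * θ * t) + θ * (s + t) / 2 * (2 * H) = 0 by ring,
      Real.exp_zero]
  linear_combination (1/2) * p1 + (1/2) * p2
    - ((2:ℝ) ^ (2 * H) * |Real.sinh (θ * (t - s) / 2)| ^ (2 * H) / 2) * p3
end

section
/- Suppose H' = H and the affine log-log relation ln E[M_{2,N,t_a,t_b}(Z)] = ln E[M_{2,1,t_a,t_b}(Z)] - 2H ln N holds asymptotically, so that 2H(ln(θ/θ') + ln(t_b - t_a)) = ln(t_b^{2H} + t_a^{2H} - (t_b t_a)^{H(1-θ/θ')}(t_b^{2Hθ/θ'} + t_a^{2Hθ/θ'} - (t_b^{θ/θ'} - t_a^{θ/θ'})^{2H})) holds for all 0 < t_a < t_b. Then θ' = θ. -/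
open Real

theorem stmt18 (H θ θ' : ℝ) (hH : H ∈ Set.Ioo (0:ℝ) 1) (hθ : 0 < θ) (hθ' : 0 < θ')
    (hyp : ∀ t_a t_b : ℝ, 0 < t_a → t_a < t_b →
      2 * H * (Real.log (θ / θ') + Real.log (t_b - t_a)) =
        Real.log (t_b ^ (2 * H) + t_a ^ (2 * H) -
          (t_b * t_a) ^ (H * (1 - θ / θ')) *
            (t_b ^ (2 * H * θ / θ') + t_a ^ (2 * H * θ / θ') -
              (t_b ^ (θ / θ') - t_a ^ (θ / θ')) ^ (2 * H)))) :
    θ' = θ := by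
  obtain ⟨hH0, hH1⟩ := hH
  set r := θ / θ' with hr_def
  have hr : 0 < r := div_pos hθ hθ'
  -- rewrite the exponent 2*H*θ/θ' as 2*H*r
  have h2Hr : 2 * H * θ / θ' = 2 * H * r := by rw [hr_def]; ring
  -- basic limit : t ^ p → 0 as t → 0⁺ for p > 0
  have hpow : ∀ p : ℝ, 0 < p →
      Filter.Tendsto (fun t : ℝ => t ^ p) (nhdsWithin 0 (Set.Ioi 0)) (nhds 0) := by
    intro p hp
    have h := (Real.continuousAt_rpow_const 0 p (Or.inr hp.le)).tendsto
    rw [Real.zero_rpow hp.ne'] at h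
    exact h.mono_left nhdsWithin_le_nhds
  -- the problematic product term
  set P : ℝ → ℝ := fun t =>
    t ^ (H * (1 - r)) * (1 + t ^ (2 * H * r) - (1 - t ^ r) ^ (2 * H)) with hP_def
  have hIoo : Set.Ioo (0:ℝ) 1 ∈ nhdsWithin (0:ℝ) (Set.Ioi 0) :=
    Ioo_mem_nhdsGT_of_mem ⟨le_refl 0, one_pos⟩
  -- bounds on P for t ∈ (0,1)
  have hP_bounds : ∀ t ∈ Set.Ioo (0:ℝ) 1,
      0 ≤ P t ∧ P t ≤ t ^ (H * (1 - r) + 2 * H * r) + 2 * t ^ (H * (1 - r) + r) := by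
    intro t ⟨ht0, ht1⟩
    have htr0 : 0 < t ^ r := Real.rpow_pos_of_pos ht0 r
    have htr1 : t ^ r < 1 := Real.rpow_lt_one ht0.le ht1 hr
    have hb0 : 0 < 1 - t ^ r := by linarith
    have hble : (1 - t ^ r) ^ (2 * H) ≤ 1 :=
      Real.rpow_le_one hb0.le (by linarith) (by linarith)
    have hinner0 : 0 ≤ 1 + t ^ (2 * H * r) - (1 - t ^ r) ^ (2 * H) := by
      have := (Real.rpow_pos_of_pos ht0 (2 * H * r)).le
      linarith
    have hpos : (0:ℝ) ≤ t ^ (H * (1 - r)) := (Real.rpow_pos_of_pos ht0 _).le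
    constructor
    · exact mul_nonneg hpos hinner0
    · -- key : 1 - (1 - t^r)^(2H) ≤ 2 * t^r
      have hkey : 1 - (1 - t ^ r) ^ (2 * H) ≤ 2 * t ^ r := by
        rcases le_total (2 * H) 1 with h2H | h2H
        · have : (1 - t ^ r) ^ (1:ℝ) ≤ (1 - t ^ r) ^ (2 * H) :=
            Real.rpow_le_rpow_of_exponent_ge hb0 (by linarith) h2H
          rw [Real.rpow_one] at this
          linarith
        · have hb := one_add_mul_self_le_rpow_one_add
            (s := -(t ^ r)) (by linarith) (p := 2 * H) h2H
          have : 1 + 2 * H * -(t ^ r) ≤ (1 - t ^ r) ^ (2 * H) := by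
            rw [← sub_eq_add_neg] at hb; exact hb
          nlinarith
      have hstep : P t ≤ t ^ (H * (1 - r)) * (t ^ (2 * H * r) + 2 * t ^ r) := by
        apply mul_le_mul_of_nonneg_left _ hpos
        linarith
      have heq : t ^ (H * (1 - r)) * (t ^ (2 * H * r) + 2 * t ^ r)
          = t ^ (H * (1 - r) + 2 * H * r) + 2 * t ^ (H * (1 - r) + r) := by
        rw [Real.rpow_add ht0, Real.rpow_add ht0]; ring
      linarith [heq ▸ hstep]
  -- exponents are positive
  have hp1 : 0 < H * (1 - r) + 2 * H * r := by nlinarith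
  have hp2 : 0 < H * (1 - r) + r := by nlinarith
  -- P → 0
  have hPlim : Filter.Tendsto P (nhdsWithin 0 (Set.Ioi 0)) (nhds 0) := by
    have hg : Filter.Tendsto
        (fun t : ℝ => t ^ (H * (1 - r) + 2 * H * r) + 2 * t ^ (H * (1 - r) + r))
        (nhdsWithin 0 (Set.Ioi 0)) (nhds 0) := by
      have := (hpow _ hp1).add (((hpow _ hp2).const_mul 2))
      simpa using this
    refine squeeze_zero' ?_ ?_ hg
    · filter_upwards [hIoo] with t ht using (hP_bounds t ht).1
    · filter_upwards [hIoo] with t ht using (hP_bounds t ht).2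
  -- E → 1
  have hElim : Filter.Tendsto (fun t : ℝ => 1 + t ^ (2 * H) - P t)
      (nhdsWithin 0 (Set.Ioi 0)) (nhds 1) := by
    have h1 : Filter.Tendsto (fun t : ℝ => 1 + t ^ (2 * H))
        (nhdsWithin 0 (Set.Ioi 0)) (nhds 1) := by
      have := (hpow (2 * H) (by linarith)).const_add 1
      simpa using this
    simpa using h1.sub hPlim
  -- log E → 0
  have hlogE : Filter.Tendsto (fun t : ℝ => Real.log (1 + t ^ (2 * H) - P t))
      (nhdsWithin 0 (Set.Ioi 0)) (nhds 0) := by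
    have := (Real.continuousAt_log one_ne_zero).tendsto.comp hElim
    rw [Real.log_one] at this
    exact this
  -- LHS → 2H * log r
  have hlhs : Filter.Tendsto (fun t : ℝ => 2 * H * (Real.log r + Real.log (1 - t)))
      (nhdsWithin 0 (Set.Ioi 0)) (nhds (2 * H * Real.log r)) := by
    have h1 : Filter.Tendsto (fun t : ℝ => Real.log (1 - t)) (nhds (0:ℝ))
        (nhds 0) := by
      have hc : Filter.Tendsto (fun t : ℝ => 1 - t) (nhds (0:ℝ)) (nhds 1) := by
        have hcont : Continuous fun t : ℝ => 1 - t := continuous_const.sub continuous_id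
        simpa using hcont.tendsto 0
      have := (Real.continuousAt_log one_ne_zero).tendsto.comp hc
      rwa [Real.log_one] at this
    have := ((h1.const_add (Real.log r)).const_mul (2 * H)).mono_left
      (nhdsWithin_le_nhds (s := Set.Ioi (0:ℝ)))
    simpa using this
  -- the two functions agree on (0,1)
  have hcongr : Filter.Tendsto (fun t : ℝ => 2 * H * (Real.log r + Real.log (1 - t)))
      (nhdsWithin 0 (Set.Ioi 0)) (nhds 0) := by
    refine hlogE.congr' ?_
    filter_upwards [hIoo] with t ⟨ht0, ht1⟩
    have h := hyp t 1 ht0 ht1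
    rw [h2Hr] at h
    simpa [Real.one_rpow, one_mul, hP_def] using h.symm
  -- conclude
  have h0 : 2 * H * Real.log r = 0 := tendsto_nhds_unique hlhs hcongr
  have hlogr : Real.log r = 0 := by
    have hH0' : (2:ℝ) * H ≠ 0 := by positivity
    exact (mul_eq_zero.mp h0).resolve_left hH0'
  have hr1 : r = 1 := by
    have := Real.exp_log hr
    rw [hlogr, Real.exp_zero] at this
    exact this.symm
  have : θ = θ' := by
    field_simp [hr_def] at hr1
    have h' : θ / θ' = 1 := hr1
    rw [div_eq_one_iff_eq hθ'.ne'] at h'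
    linarith
  linarith
end
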